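/- Given (u0,u1) ∈ H × H, define for ℓ ≥ 0 the functions v_{ℓ,0}(t) = (−1)^ℓ [ Σ_{j=0}^{ℓ} binom(ℓ, j) ((−t)^j / j!) A^j e^{−tA}(u0 + u1) − Σ_{j=0}^{ℓ−1} binom(ℓ−1, j) ((−t)^j / j!) A^j e^{−tA} u0 ] (the second sum being empty for ℓ = 0). Then v_{0,0}(t) = e^{−tA}(u0+u1), and for every ℓ ≥ 1 and t ≥ 0: v_{ℓ,0}'(t) + A v_{ℓ,0}(t) = −v_{ℓ−1,0}'(t), and v_{ℓ,0}(0) = (−1)^ℓ u1. -/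

import Mathlib

open scoped RealInnerProductSpace

universe u

/-- The auxiliary profiles `v_{ℓ,0}(t)` from Section 2.2.1. -/
noncomputable def vl0 {H : Type u} [NormedAddCommGroup H] [InnerProductSpace ℝ H]
    [CompleteSpace H] (A : H →L[ℝ] H) (u0 u1 : H) (ℓ : ℕ) (t : ℝ) : H :=
  ((-1 : ℝ) ^ ℓ) •
    ((∑ j ∈ Finset.range (ℓ + 1),
        ((ℓ.choose j : ℝ) * ((-t) ^ j / (Nat.factorial j : ℝ))) •
          ((A ^ j) (NormedSpace.exp ((-t) • A) (u0 + u1))))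
      - ∑ j ∈ Finset.range ℓ,
          (((ℓ - 1).choose j : ℝ) * ((-t) ^ j / (Nat.factorial j : ℝ))) •
            ((A ^ j) (NormedSpace.exp ((-t) • A) u0)))

section Aux

variable {H : Type u} [NormedAddCommGroup H] [InnerProductSpace ℝ H] [CompleteSpace H]

/-- The building block `g_j(t) = ((-t)^j/j!) • A^j e^{-tA} y`. -/
noncomputable def gfun (A : H →L[ℝ] H) (y : H) (j : ℕ) (t : ℝ) : H :=
  ((-t) ^ j / (Nat.factorial j : ℝ)) • ((A ^ j) (NormedSpace.exp ((-t) • A) y))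

/-- The derivative of `gfun`. -/
noncomputable def dgfun (A : H →L[ℝ] H) (y : H) (j : ℕ) (t : ℝ) : H :=
  (if j = 0 then 0 else -(A (gfun A y (j - 1) t))) - A (gfun A y j t)

lemma hasDerivAt_expneg (A : H →L[ℝ] H) (y : H) (t : ℝ) :
    HasDerivAt (fun s : ℝ => NormedSpace.exp ((-s) • A) y)
      (-(A (NormedSpace.exp ((-t) • A) y))) t := by
  have h1 : HasDerivAt (fun s : ℝ => NormedSpace.exp (s • A))
      (A * NormedSpace.exp ((-t) • A)) (-t) :=
    hasDerivAt_exp_smul_const' A (-t)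
  have h2 : HasDerivAt (fun s : ℝ => NormedSpace.exp ((-s) • A))
      (-(A * NormedSpace.exp ((-t) • A))) t := by
    simpa [Function.comp_def] using h1.scomp t (hasDerivAt_neg t)
  have h3 := (ContinuousLinearMap.apply ℝ H y).hasFDerivAt.comp_hasDerivAt t h2
  simpa [Function.comp_def] using h3

set_option maxHeartbeats 1000000 in
lemma hasDerivAt_gfun (A : H →L[ℝ] H) (y : H) (j : ℕ) (t : ℝ) :
    HasDerivAt (gfun A y j) (dgfun A y j t) t := by
  have hw := hasDerivAt_expneg A y t
  have hAw : HasDerivAt (fun s : ℝ => (A ^ j) (NormedSpace.exp ((-s) • A) y))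
      ((A ^ j) (-(A (NormedSpace.exp ((-t) • A) y)))) t :=
    (A ^ j).hasFDerivAt.comp_hasDerivAt t hw
  cases j with
  | zero =>
      have heq : gfun A y 0 = fun s : ℝ => (A ^ 0) (NormedSpace.exp ((-s) • A) y) := by
        funext s; simp [gfun]
      have : HasDerivAt (gfun A y 0)
          ((A ^ 0) (-(A (NormedSpace.exp ((-t) • A) y)))) t := by
        rw [heq]; exact hAw
      simpa [dgfun, gfun] using this
  | succ k =>
      have hc : HasDerivAt (fun s : ℝ => (-s) ^ (k + 1) / (Nat.factorial (k + 1) : ℝ))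
          (-((-t) ^ k / (Nat.factorial k : ℝ))) t := by
        have hp : HasDerivAt (fun x : ℝ => x ^ (k + 1)) (((k : ℝ) + 1) * (-t) ^ k) (-t) := by
          simpa using hasDerivAt_pow (k + 1) (-t)
        have hp2 : HasDerivAt (fun s : ℝ => (-s) ^ (k + 1))
            (-(((k : ℝ) + 1) * (-t) ^ k)) t := by
          simpa [Function.comp_def] using hp.scomp t (hasDerivAt_neg t)
        have := hp2.div_const (Nat.factorial (k + 1) : ℝ)
        refine this.congr_deriv ?_
        have hfac : (Nat.factorial (k + 1) : ℝ) = ((k : ℝ) + 1) * (Nat.factorial k : ℝ) := by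
          rw [Nat.factorial_succ]; push_cast; ring
        rw [hfac]
        have hk1 : ((k : ℝ) + 1) ≠ 0 := by positivity
        have hkf : (Nat.factorial k : ℝ) ≠ 0 := Nat.cast_ne_zero.2 (Nat.factorial_ne_zero k)
        field_simp
      have h := hc.smul hAw
      have hgeq : gfun A y (k + 1)
          = fun s : ℝ => ((-s) ^ (k + 1) / (Nat.factorial (k + 1) : ℝ)) •
              ((A ^ (k + 1)) (NormedSpace.exp ((-s) • A) y)) := rfl
      rw [hgeq]
      refine h.congr_deriv ?_
      have hcomm : A * A ^ (k + 1) = A ^ (k + 1) * A := by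
        rw [← pow_succ', ← pow_succ]
      have e1 : A ((A ^ k) (NormedSpace.exp ((-t) • A) y))
          = (A ^ (k + 1)) (NormedSpace.exp ((-t) • A) y) := by
        rw [← ContinuousLinearMap.mul_apply, ← pow_succ']
      have e2 : A ((A ^ (k + 1)) (NormedSpace.exp ((-t) • A) y))
          = (A ^ (k + 1)) (A (NormedSpace.exp ((-t) • A) y)) := by
        calc A ((A ^ (k + 1)) (NormedSpace.exp ((-t) • A) y))
            = (A * A ^ (k + 1)) (NormedSpace.exp ((-t) • A) y) := rfl
          _ = (A ^ (k + 1) * A) (NormedSpace.exp ((-t) • A) y) := by rw [hcomm]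
          _ = (A ^ (k + 1)) (A (NormedSpace.exp ((-t) • A) y)) := rfl
      have f1 : A (gfun A y k t) = ((-t) ^ k / (Nat.factorial k : ℝ)) •
          ((A ^ (k + 1)) (NormedSpace.exp ((-t) • A) y)) := by
        rw [gfun, map_smul, e1]
      have f2 : A (gfun A y (k + 1) t)
          = ((-t) ^ (k + 1) / (Nat.factorial (k + 1) : ℝ)) •
            ((A ^ (k + 1)) (A (NormedSpace.exp ((-t) • A) y))) := by
        rw [gfun, map_smul, e2]
      rw [dgfun, if_neg (Nat.succ_ne_zero k), Nat.add_sub_cancel, f1, f2, map_neg,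
        smul_neg, neg_smul]
      module

lemma vl0_eq (A : H →L[ℝ] H) (u0 u1 : H) (ℓ : ℕ) :
    vl0 A u0 u1 ℓ = fun t : ℝ => ((-1 : ℝ) ^ ℓ) •
      ((∑ j ∈ Finset.range (ℓ + 1), (ℓ.choose j : ℝ) • gfun A (u0 + u1) j t)
        - ∑ j ∈ Finset.range ℓ, ((ℓ - 1).choose j : ℝ) • gfun A u0 j t) := by
  funext t
  simp [vl0, gfun, mul_smul]

lemma hasDerivAt_vl0 (A : H →L[ℝ] H) (u0 u1 : H) (ℓ : ℕ) (t : ℝ) :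
    HasDerivAt (vl0 A u0 u1 ℓ) (((-1 : ℝ) ^ ℓ) •
      ((∑ j ∈ Finset.range (ℓ + 1), (ℓ.choose j : ℝ) • dgfun A (u0 + u1) j t)
        - ∑ j ∈ Finset.range ℓ, ((ℓ - 1).choose j : ℝ) • dgfun A u0 j t)) t := by
  rw [vl0_eq]
  exact HasDerivAt.congr_of_eventuallyEq (((HasDerivAt.sum (u := Finset.range (ℓ + 1)) fun j _ => (hasDerivAt_gfun A (u0 + u1) j t).const_smul (ℓ.choose j : ℝ)).sub
    (HasDerivAt.sum (u := Finset.range ℓ) fun j _ => (hasDerivAt_gfun A u0 j t).const_smul ((ℓ - 1).choose j : ℝ))).const_smul ((-1 : ℝ) ^ ℓ))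
    (Filter.Eventually.of_forall fun s => by simp [Finset.sum_apply])

/-- The key combinatorial identity. -/
lemma key (A : H →L[ℝ] H) (y : H) (n : ℕ) (t : ℝ) :
    (∑ j ∈ Finset.range (n + 1), (n.choose j : ℝ) • dgfun A y j t)
      + ∑ j ∈ Finset.range (n + 1), (n.choose j : ℝ) • (A (gfun A y j t))
      = ∑ j ∈ Finset.range n, ((n - 1).choose j : ℝ) • dgfun A y j t := by
  rw [← Finset.sum_add_distrib]
  have hterm : ∀ j, (n.choose j : ℝ) • dgfun A y j t + (n.choose j : ℝ) • (A (gfun A y j t))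
      = (n.choose j : ℝ) • (if j = 0 then (0 : H) else -(A (gfun A y (j - 1) t))) := by
    intro j
    rw [← smul_add]
    congr 1
    simp [dgfun]
  simp only [hterm]
  cases n with
  | zero => simp
  | succ m =>
      rw [Finset.sum_range_succ']
      have hL : ∀ i ∈ Finset.range (m + 1),
          ((m + 1).choose (i + 1) : ℝ) •
              (if i + 1 = 0 then (0 : H) else -(A (gfun A y (i + 1 - 1) t)))
            = ((m.choose i : ℝ) + (m.choose (i + 1) : ℝ)) • (-(A (gfun A y i t))) := by
        intro i _
        simp only [if_neg (Nat.succ_ne_zero i), Nat.add_sub_cancel]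
        congr 1
        rw [Nat.choose_succ_succ]
        push_cast
        ring
      rw [Finset.sum_congr rfl hL]
      have hz : ((m + 1).choose 0 : ℝ) •
          (if (0 : ℕ) = 0 then (0 : H) else -(A (gfun A y (0 - 1) t))) = 0 := by simp
      rw [hz, add_zero]
      -- RHS: expand dgfun
      have hR : ∀ j ∈ Finset.range (m + 1), ((m + 1 - 1).choose j : ℝ) • dgfun A y j t
          = (m.choose j : ℝ) • (if j = 0 then (0 : H) else -(A (gfun A y (j - 1) t)))
            + (m.choose j : ℝ) • (-(A (gfun A y j t))) := by
        intro j _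
        simp only [Nat.add_sub_cancel, dgfun, sub_eq_add_neg, smul_add]
      rw [Finset.sum_congr rfl hR, Finset.sum_add_distrib]
      rw [Finset.sum_range_succ' (fun j => (m.choose j : ℝ) •
        (if j = 0 then (0 : H) else -(A (gfun A y (j - 1) t)))) m]
      have hz' : ((m).choose 0 : ℝ) •
          (if (0 : ℕ) = 0 then (0 : H) else -(A (gfun A y (0 - 1) t))) = 0 := by simp
      rw [hz', add_zero]
      have hL' : ∀ i ∈ Finset.range m,
          ((m).choose (i + 1) : ℝ) •
              (if i + 1 = 0 then (0 : H) else -(A (gfun A y (i + 1 - 1) t)))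
            = (m.choose (i + 1) : ℝ) • (-(A (gfun A y i t))) := by
        intro i _
        simp only [if_neg (Nat.succ_ne_zero i), Nat.add_sub_cancel]
      rw [Finset.sum_congr rfl hL']
      -- now pure algebra on sums
      simp only [add_smul]
      rw [Finset.sum_add_distrib]
      have hext : ∑ i ∈ Finset.range (m + 1), (m.choose (i + 1) : ℝ) • (-(A (gfun A y i t)))
          = ∑ i ∈ Finset.range m, (m.choose (i + 1) : ℝ) • (-(A (gfun A y i t))) := by
        rw [Finset.sum_range_succ, Nat.choose_succ_self]
        simp
      rw [hext]
      abel

lemma vl0_zero (A : H →L[ℝ] H) (u0 u1 : H) (ℓ : ℕ) (hℓ : 1 ≤ ℓ) :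
    vl0 A u0 u1 ℓ 0 = ((-1 : ℝ) ^ ℓ) • u1 := by
  have hsum1 : (∑ j ∈ Finset.range (ℓ + 1),
      ((ℓ.choose j : ℝ) * ((-(0 : ℝ)) ^ j / (Nat.factorial j : ℝ))) •
        ((A ^ j) (NormedSpace.exp ((-(0 : ℝ)) • A) (u0 + u1)))) = u0 + u1 := by
    rw [Finset.sum_eq_single 0]
    · simp [NormedSpace.exp_zero]
    · intro j _ hj
      simp [zero_pow hj]
    · intro h; exact absurd (Finset.mem_range.2 (Nat.succ_pos ℓ)) h
  have hsum2 : (∑ j ∈ Finset.range ℓ,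
      (((ℓ - 1).choose j : ℝ) * ((-(0 : ℝ)) ^ j / (Nat.factorial j : ℝ))) •
        ((A ^ j) (NormedSpace.exp ((-(0 : ℝ)) • A) u0))) = u0 := by
    rw [Finset.sum_eq_single 0]
    · simp [NormedSpace.exp_zero]
    · intro j _ hj
      simp [zero_pow hj]
    · intro h; exact absurd (Finset.mem_range.2 hℓ) h
  rw [vl0, hsum1, hsum2]
  congr 1
  abel

end Aux

/-- `v_{0,0}(t) = e^{-tA}(u0+u1)`, and for `ℓ ≥ 1` the profiles satisfy
`v_{ℓ,0}'(t) + A v_{ℓ,0}(t) = −v_{ℓ−1,0}'(t)` with `v_{ℓ,0}(0) = (−1)^ℓ u1`. -/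
theorem stmt_12 {H : Type u} [NormedAddCommGroup H] [InnerProductSpace ℝ H] [CompleteSpace H]
    (A : H →L[ℝ] H) (hA : IsSelfAdjoint A) (hApos : ∀ x : H, 0 ≤ ⟪A x, x⟫)
    (u0 u1 : H) :
    (∀ t : ℝ, vl0 A u0 u1 0 t = NormedSpace.exp ((-t) • A) (u0 + u1))
      ∧ ∀ ℓ : ℕ, 1 ≤ ℓ →
          (∀ t ≥ (0:ℝ),
            deriv (vl0 A u0 u1 ℓ) t + A (vl0 A u0 u1 ℓ t)
              = -deriv (vl0 A u0 u1 (ℓ - 1)) t)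
          ∧ vl0 A u0 u1 ℓ 0 = ((-1 : ℝ) ^ ℓ) • u1 := by
  constructor
  · intro t
    simp [vl0]
  · intro ℓ hℓ
    obtain ⟨m, rfl⟩ : ∃ m, ℓ = m + 1 := ⟨ℓ - 1, by omega⟩
    refine ⟨?_, vl0_zero A u0 u1 (m + 1) hℓ⟩
    intro t _
    have hD1 := (hasDerivAt_vl0 A u0 u1 (m + 1) t).deriv
    have hD0 := (hasDerivAt_vl0 A u0 u1 m t).deriv
    have hv := congrFun (vl0_eq A u0 u1 (m + 1)) t
    simp only [Nat.add_sub_cancel] at hD1 hD0 hv ⊢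
    rw [hD1, hD0, hv, map_smul, ← smul_add]
    have hAs : A ((∑ j ∈ Finset.range (m + 1 + 1),
          ((m + 1).choose j : ℝ) • gfun A (u0 + u1) j t)
        - ∑ j ∈ Finset.range (m + 1), (m.choose j : ℝ) • gfun A u0 j t)
      = (∑ j ∈ Finset.range (m + 1 + 1), ((m + 1).choose j : ℝ) • A (gfun A (u0 + u1) j t))
        - ∑ j ∈ Finset.range (m + 1), (m.choose j : ℝ) • A (gfun A u0 j t) := by
      rw [map_sub, map_sum, map_sum]
      simp only [map_smul]
    rw [hAs]
    have k1 := key A (u0 + u1) (m + 1) t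
    have k2 := key A u0 m t
    simp only [Nat.add_sub_cancel] at k1 k2
    rw [sub_add_sub_comm, k1, k2]
    rw [pow_succ, mul_comm, mul_smul, neg_one_smul]
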